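/- If for each λ the sequence x̄^λ realizes the minimum in the representation formula u_λ(x_0^λ) = Σ λⁿ c(x^λ_{-n-1}, x^λ_{-n}) (with critical value normalized to 0), then any weak-* limit μ̃ of μ̃^λ_{x̄^λ} as λ → 1⁻ satisfies ∫_{M×M} c dμ̃ = 0, i.e. μ̃ is a Mather measure. -/

import Mathlib

open MeasureTheory Filter Topology

/-- The discounted occupation measure `μ̃^λ_{x̄} = (1-λ) ∑ λⁿ δ_{(x_{-n-1}, x_{-n})}`. -/
noncomputable def discountedOccupation {M : Type*} [MeasurableSpace M]
    (lam : ℝ) (p : ℕ → M) : Measure (M × M) :=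
  Measure.sum fun n : ℕ =>
    (ENNReal.ofReal ((1 - lam) * lam ^ n)) • Measure.dirac (p (n + 1), p n)

lemma discocc_univ {M : Type*} [MeasurableSpace M] {lam : ℝ} (h0 : 0 ≤ lam) (h1 : lam < 1)
    (p : ℕ → M) : (discountedOccupation lam p) Set.univ = 1 := by
  rw [discountedOccupation, Measure.sum_apply _ MeasurableSet.univ]
  simp only [Measure.smul_apply, Measure.dirac_apply_of_mem (Set.mem_univ _), smul_eq_mul,
    mul_one]
  have hsum : Summable (fun n : ℕ => (1 - lam) * lam ^ n) :=
    (summable_geometric_of_lt_one h0 h1).mul_left _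
  rw [← ENNReal.ofReal_tsum_of_nonneg (fun n => mul_nonneg (by linarith) (pow_nonneg h0 n)) hsum,
    tsum_mul_left, tsum_geometric_of_lt_one h0 h1]
  rw [mul_inv_cancel₀ (by linarith), ENNReal.ofReal_one]

lemma discocc_integral {M : Type*} [MetricSpace M] [CompactSpace M]
    [MeasurableSpace M] [BorelSpace M]
    {lam : ℝ} (h0 : 0 ≤ lam) (h1 : lam < 1) (p : ℕ → M)
    (f : M × M → ℝ) (hf : Continuous f) :
    ∫ z, f z ∂(discountedOccupation lam p)
      = ∑' n : ℕ, (1 - lam) * lam ^ n * f (p (n + 1), p n) := by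
  have hfin : IsFiniteMeasure (discountedOccupation lam p) :=
    ⟨by rw [discocc_univ h0 h1]; exact ENNReal.one_lt_top⟩
  have hint : Integrable f (discountedOccupation lam p) := by
    have := BoundedContinuousFunction.integrable (μ := discountedOccupation lam p)
      (BoundedContinuousFunction.mkOfCompact ⟨f, hf⟩)
    exact this
  rw [discountedOccupation, integral_sum_measure (by rwa [discountedOccupation] at hint)]
  congr 1
  ext n
  rw [integral_smul_measure, integral_dirac,
    ENNReal.toReal_ofReal (mul_nonneg (by linarith) (pow_nonneg h0 n)), smul_eq_mul]

lemma u_bound {M : Type*} [MetricSpace M] [CompactSpace M] [Nonempty M]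
    (c : M × M → ℝ) (hc : Continuous c) (v u : C(M, ℝ)) {lam : ℝ}
    (hl0 : 0 < lam) (hl1 : lam < 1)
    (hv : ∀ x : M, v x = ⨅ y : M, (v y + c (y, x)))
    (hu : ∀ x : M, u x = ⨅ y : M, (lam * u y + c (y, x))) :
    ‖u‖ ≤ 2 * ‖v‖ := by
  set D : ℝ := ‖u - v‖ with hD
  set K : ℝ := lam * D + (1 - lam) * ‖v‖ with hK
  have hpt : ∀ y : M, |lam * u y - v y| ≤ K := by
    intro y
    have h1 : lam * u y - v y = lam * (u y - v y) + (lam - 1) * v y := by ring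
    have h2 : |u y - v y| ≤ D := by
      simpa using ContinuousMap.norm_coe_le_norm (u - v) y
    have h3 : |v y| ≤ ‖v‖ := by
      simpa [Real.norm_eq_abs] using ContinuousMap.norm_coe_le_norm v y
    calc |lam * u y - v y| ≤ |lam * (u y - v y)| + |(lam - 1) * v y| := by
          rw [h1]; exact abs_add_le _ _
      _ ≤ lam * D + (1 - lam) * ‖v‖ := by
          rw [abs_mul, abs_mul, abs_of_pos hl0, abs_of_neg (by linarith : lam - 1 < 0)]
          have : -(lam - 1) = 1 - lam := by ring
          rw [this]
          gcongr <;> linarith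
  have hbf : ∀ x : M, BddBelow (Set.range fun y : M => lam * u y + c (y, x)) := fun x =>
    (isCompact_range (by fun_prop)).bddBelow
  have hbg : ∀ x : M, BddBelow (Set.range fun y : M => v y + c (y, x)) := fun x =>
    (isCompact_range (by fun_prop)).bddBelow
  have hDle : D ≤ K := by
    have : ∀ x : M, |u x - v x| ≤ K := by
      intro x
      rw [abs_le]
      constructor
      · -- v x - K ≤ u x, i.e. v x ≤ u x + K
        have h1 : v x - K ≤ ⨅ y : M, (lam * u y + c (y, x)) := by
          apply le_ciInf
          intro y
          have := ciInf_le (hbg x) y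
          rw [← hv x] at this
          have h2 := (abs_le.mp (hpt y)).1
          linarith
        rw [← hu x] at h1; linarith
      · have h1 : u x - K ≤ ⨅ y : M, (v y + c (y, x)) := by
          apply le_ciInf
          intro y
          have := ciInf_le (hbf x) y
          rw [← hu x] at this
          have h2 := (abs_le.mp (hpt y)).2
          linarith
        rw [← hv x] at h1; linarith
    have hK0 : 0 ≤ K := le_trans (abs_nonneg _) (this (Classical.arbitrary M))
    rw [hD]
    exact (ContinuousMap.norm_le _ hK0).mpr fun x => by
      simpa [Real.norm_eq_abs] using this x
  have hDv : D ≤ ‖v‖ := by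
    rw [hK] at hDle
    nlinarith [norm_nonneg v, norm_nonneg (u - v)]
  calc ‖u‖ = ‖(u - v) + v‖ := by ring_nf
    _ ≤ ‖u - v‖ + ‖v‖ := norm_add_le _ _
    _ ≤ 2 * ‖v‖ := by rw [← hD]; linarith

/-- If each backward sequence `x̄^λ` realizes the minimum in the representation formula
for the solution `u_λ` of `u_λ = T_λ u_λ` (critical value normalized to `0`), then any
weak-* limit `μ̃` of the occupation measures `μ̃^λ_{x̄^λ}` as `λ → 1⁻` satisfies
`∫ c dμ̃ = 0`, i.e. `μ̃` is a Mather measure. -/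
theorem limit_of_minimizing_discountedOccupation_isMather
    {M : Type*} [MetricSpace M] [CompactSpace M] [Nonempty M]
    [MeasurableSpace M] [BorelSpace M]
    (c : M × M → ℝ) (hc : Continuous c)
    (hcrit : ∃ v : C(M, ℝ), ∀ x : M, v x = ⨅ y : M, (v y + c (y, x)))
    (us : ℝ → C(M, ℝ))
    (hus : ∀ lam : ℝ, 0 < lam → lam < 1 →
      ∀ x : M, us lam x = ⨅ y : M, (lam * us lam y + c (y, x)))
    (p : ℝ → ℕ → M)
    (hmin : ∀ lam : ℝ, 0 < lam → lam < 1 →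
      (us lam (p lam 0) = ∑' n : ℕ, lam ^ n * c (p lam (n + 1), p lam n)) ∧
      ∀ q : ℕ → M, q 0 = p lam 0 →
        us lam (p lam 0) ≤ ∑' n : ℕ, lam ^ n * c (q (n + 1), q n))
    (μt : Measure (M × M)) [IsProbabilityMeasure μt]
    (lams : ℕ → ℝ) (h0 : ∀ i, 0 < lams i) (h1 : ∀ i, lams i < 1)
    (hlims : Tendsto lams atTop (𝓝 1))
    (hconv : ∀ f : C(M × M, ℝ),
      Tendsto (fun i => ∫ z, f z ∂(discountedOccupation (lams i) (p (lams i))))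
        atTop (𝓝 (∫ z, f z ∂μt))) :
    ∫ z, c z ∂μt = 0 := by
  obtain ⟨v, hv⟩ := hcrit
  have key : ∀ i, ∫ z, c z ∂(discountedOccupation (lams i) (p (lams i)))
      = (1 - lams i) * us (lams i) (p (lams i) 0) := by
    intro i
    rw [discocc_integral (h0 i).le (h1 i) _ c hc, (hmin (lams i) (h0 i) (h1 i)).1,
      ← tsum_mul_left]
    congr 1; ext n; ring
  have hT := hconv ⟨c, hc⟩
  simp only [ContinuousMap.coe_mk, key] at hT
  have hzero : Tendsto (fun i => (1 - lams i) * us (lams i) (p (lams i) 0)) atTop (𝓝 0) := by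
    refine squeeze_zero_norm (a := fun i => (1 - lams i) * (2 * ‖v‖)) ?_ ?_
    · intro i
      have hb : |us (lams i) (p (lams i) 0)| ≤ 2 * ‖v‖ := by
        refine le_trans ?_ (u_bound c hc v (us (lams i)) (h0 i) (h1 i) hv
          (hus (lams i) (h0 i) (h1 i)))
        simpa [Real.norm_eq_abs] using ContinuousMap.norm_coe_le_norm (us (lams i)) _
      rw [Real.norm_eq_abs, abs_mul, abs_of_pos (by linarith [h1 i] : (0:ℝ) < 1 - lams i)]
      exact mul_le_mul_of_nonneg_left hb (by linarith [h1 i])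
    · have : Tendsto (fun i => 1 - lams i) atTop (𝓝 0) := by
        have := hlims.const_sub 1
        simpa using this
      simpa using this.mul_const (2 * ‖v‖)
  exact tendsto_nhds_unique hT hzero
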